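/- Given any instance Nim−F of CIS-Nim, let π(n) be the number of P-positions {x,y,z} (unordered) with x, y, z all less than n. Then there exists a constant c > 0 such that π(n) ≥ (n − |F|)²/24 for all n > |F|. Consequently, any limit of π(n·2^k)/(n·2^k)² along k → ∞ is at least 1/24 > 0. -/

import Mathlib

open Filter

/-- A move in Nim: strictly decrease one heap. -/
def NimMove (a b : Multiset ℕ) : Prop :=
  ∃ x y, x ∈ a ∧ y < x ∧ b = y ::ₘ a.erase x

theorem NimMove.sum_lt {a b : Multiset ℕ} (h : NimMove a b) : b.sum < a.sum := by
  obtain ⟨x, y, hx, hyx, rfl⟩ := h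
  have hc : x ::ₘ a.erase x = a := Multiset.cons_erase hx
  have h1 : (y ::ₘ a.erase x).sum = y + (a.erase x).sum := Multiset.sum_cons y _
  have h2 : a.sum = x + (a.erase x).sum := by
    conv_lhs => rw [← hc]
    exact Multiset.sum_cons x _
  omega

/-- P-positions of Nim minus a forbidden finite set `F`, by the standard recursion:
a position is P iff every child not in `F` is an N-position. -/
def NimP (F : Finset (Multiset ℕ)) (a : Multiset ℕ) : Prop :=
  ∀ b, NimMove a b → b ∉ F → ¬ NimP F b
termination_by a.sum
decreasing_by exact NimMove.sum_lt (by assumption)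

/-- A P-position of Nim−F : a valid position (not forbidden) which is P. -/
def PPos (F : Finset (Multiset ℕ)) (a : Multiset ℕ) : Prop :=
  a ∉ F ∧ NimP F a

/-- Largest heap size appearing in any forbidden position. -/
def Fmax (F : Finset (Multiset ℕ)) : ℕ := F.sup Multiset.sup

/-- The set S of pairs (x,y) such that there is z with z < y < x and {x,y,z} a P-position. -/
def Sset (F : Finset (Multiset ℕ)) : Set (ℕ × ℕ) :=
  {p | ∃ z, z < p.2 ∧ p.2 < p.1 ∧ PPos F {p.1, p.2, z}}

/-- r(x,y): number of elements of S of the form (x',y) with x' ≥ x. -/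
noncomputable def rdef (F : Finset (Multiset ℕ)) (x y : ℕ) : ℕ :=
  {x' | x ≤ x' ∧ (x', y) ∈ Sset F}.ncard

/-- b(x,y): number of elements of S of the form (x,y') with y' ≤ y. -/
noncomputable def bdef (F : Finset (Multiset ℕ)) (x y : ℕ) : ℕ :=
  {y' | y' ≤ y ∧ (x, y') ∈ Sset F}.ncard

/-- U_{x,y} = A ∪ B ∪ C ∪ D. -/
def Uset (F : Finset (Multiset ℕ)) (x y : ℕ) : Set (ℕ × ℕ) :=
  {p | (p.2 < p.1 ∧ p.1 ≤ x ∧ bdef F p.1 p.1 ≥ p.1 - p.2) ∨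
       (p.1 = x ∧ p.2 < y ∧ bdef F x (y - 1) ≥ y - p.2) ∨
       (y ≤ p.2 ∧ p.2 < x ∧ x ≤ p.1 ∧ rdef F x p.2 > p.1 - x) ∨
       (p.2 < y ∧ y ≤ x ∧ x < p.1 ∧ rdef F (x + 1) p.2 > p.1 - (x + 1))}

/-- Ū_{x,y}: agrees with U_{x,y} for second coordinate < x, and for y' ≥ x contains
(x',y') iff y' < x' ≤ 2y' and (y', ⌊x'/2⌋) ∉ Ū_{x,y}. -/
def Ubar (F : Finset (Multiset ℕ)) (x y : ℕ) (p : ℕ × ℕ) : Prop :=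
  if p.2 < x then p ∈ Uset F x y
  else if h : p.2 < p.1 then p.1 ≤ 2 * p.2 ∧ ¬ Ubar F x y (p.2, p.1 / 2)
  else False
termination_by p.1
decreasing_by exact h

/-- S_n = Ū_{n,0}. -/
def Sn (F : Finset (Multiset ℕ)) (n : ℕ) : Set (ℕ × ℕ) := {p | Ubar F n 0 p}

/-- R_n = {(x,y) : y < n ≤ x ≤ 2y}. -/
def Rn (n : ℕ) : Set (ℕ × ℕ) := {p | p.2 < n ∧ n ≤ p.1 ∧ p.1 ≤ 2 * p.2}

/-- h(m,n) = |R_n ∩ S_m|. -/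
noncomputable def hdef (F : Finset (Multiset ℕ)) (m n : ℕ) : ℕ := (Rn n ∩ Sn F m).ncard

/-- π(n): number of P-positions (unordered multisets) with all entries < n. -/
noncomputable def piNim (F : Finset (Multiset ℕ)) (n : ℕ) : ℕ :=
  {s : Multiset ℕ | s.card = 3 ∧ (∀ a ∈ s, a < n) ∧ PPos F s}.ncard

section Aux
variable (F : Finset (Multiset ℕ))

lemma nimP_iff (a : Multiset ℕ) :
    NimP F a ↔ ∀ b, NimMove a b → b ∉ F → ¬ NimP F b := by
  rw [NimP]

lemma not_ppos_pair {y z x x' : ℕ} (hlt : x < x')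
    (h : PPos F (x ::ₘ y ::ₘ {z})) (h' : PPos F (x' ::ₘ y ::ₘ {z})) : False :=
  (nimP_iff F _).1 h'.2 _
    ⟨x', x, Multiset.mem_cons_self _ _, hlt, by rw [Multiset.erase_cons_head]⟩ h.1 h.2

lemma ppos_unique {y z x x' : ℕ}
    (h : PPos F (x ::ₘ y ::ₘ {z})) (h' : PPos F (x' ::ₘ y ::ₘ {z})) : x = x' := by
  rcases lt_trichotomy x x' with hlt | heq | hlt
  · exact absurd (not_ppos_pair F hlt h h') not_false
  · exact heq
  · exact absurd (not_ppos_pair F hlt h' h) not_false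

lemma exists_ppos (y z : ℕ) :
    ∃ x, x ≤ y + z + F.card ∧ PPos F (x ::ₘ y ::ₘ {z}) := by
  by_contra hcon
  push_neg at hcon
  set B := y + z + F.card with hB
  set bad := (Finset.range (B+1)).filter (fun x => (x ::ₘ y ::ₘ {z}) ∈ F) with hbaddef
  have hbad : bad.card ≤ F.card := by
    apply Finset.card_le_card_of_injOn (fun x => (x ::ₘ y ::ₘ {z} : Multiset ℕ))
    · intro x hx
      simp only [Finset.mem_coe, hbaddef, Finset.mem_filter] at hx
      exact hx.2
    · intro a _ b _ hab
      have := congrArg Multiset.sum hab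
      simpa using this
  set good := Finset.range (B+1) \ bad with hgooddef
  have hgood : y + z + 1 ≤ good.card := by
    have h1 : good.card = B + 1 - bad.card := by
      rw [hgooddef, Finset.card_sdiff_of_subset (Finset.filter_subset _ _), Finset.card_range]
    omega
  set T := (({0} : Finset ℕ) ×ˢ Finset.range y) ∪ (({1} : Finset ℕ) ×ˢ Finset.range z) with hT
  have hTcard : T.card ≤ y + z := by
    refine le_trans (Finset.card_union_le _ _) ?_
    simp
  have claim : ∀ x ∈ good, ∃ p : ℕ × ℕ, p ∈ T ∧
      ((p.1 = 0 ∧ PPos F (x ::ₘ p.2 ::ₘ {z})) ∨ (p.1 = 1 ∧ PPos F (x ::ₘ y ::ₘ {p.2}))) := by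
    intro x hx
    rw [hgooddef, Finset.mem_sdiff, Finset.mem_range] at hx
    obtain ⟨hxB, hxbad⟩ := hx
    have hnF : (x ::ₘ y ::ₘ {z}) ∉ F := by
      intro h
      exact hxbad (Finset.mem_filter.2 ⟨Finset.mem_range.2 hxB, h⟩)
    have hnP : ¬ NimP F (x ::ₘ y ::ₘ {z}) := fun h => hcon x (by omega) ⟨hnF, h⟩
    rw [nimP_iff] at hnP
    push_neg at hnP
    obtain ⟨b, ⟨u, w, hu, hwu, hb⟩, hbF, hbP⟩ := hnP
    rcases Multiset.mem_cons.1 hu with rfl | hu2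
    · -- u = x
      rw [Multiset.erase_cons_head] at hb
      subst hb
      exact absurd ⟨hbF, hbP⟩ (hcon w (by omega))
    rcases Multiset.mem_cons.1 hu2 with rfl | hu3
    · -- u = y
      have he : (x ::ₘ u ::ₘ {z}).erase u = x ::ₘ {z} := by
        rw [Multiset.cons_swap x u, Multiset.erase_cons_head]
      rw [he] at hb
      have hb' : b = x ::ₘ w ::ₘ {z} := by rw [hb, Multiset.cons_swap]
      subst hb'
      refine ⟨(0, w), ?_, Or.inl ⟨rfl, hbF, hbP⟩⟩
      simp [hT, hwu]
    · -- u = z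
      have hu4 : u = z := Multiset.mem_singleton.1 hu3
      subst hu4
      have he : (x ::ₘ y ::ₘ {u}).erase u = x ::ₘ {y} := by
        have e1 : (x ::ₘ y ::ₘ {u} : Multiset ℕ) = u ::ₘ x ::ₘ {y} := by
          show x ::ₘ y ::ₘ u ::ₘ 0 = u ::ₘ x ::ₘ y ::ₘ 0
          rw [Multiset.cons_swap y u, Multiset.cons_swap x u]
        rw [e1, Multiset.erase_cons_head]
      rw [he] at hb
      have hb' : b = x ::ₘ y ::ₘ {w} := by
        rw [hb]
        show w ::ₘ x ::ₘ y ::ₘ 0 = x ::ₘ y ::ₘ w ::ₘ 0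
        rw [Multiset.cons_swap w x, Multiset.cons_swap w y]
      subst hb'
      refine ⟨(1, w), ?_, Or.inr ⟨rfl, hbF, hbP⟩⟩
      simp [hT, hwu]
  choose! p hpT hprop using claim
  obtain ⟨x₁, hx₁, x₂, hx₂, hne, heq⟩ :=
    Finset.exists_ne_map_eq_of_card_lt_of_maps_to (by omega : T.card < good.card) hpT
  rcases hprop x₁ hx₁ with ⟨h0, hP1⟩ | ⟨h1, hP1⟩ <;>
    rcases hprop x₂ hx₂ with ⟨h0', hP2⟩ | ⟨h1', hP2⟩ <;>
      rw [← heq] at hP2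
  · exact hne (ppos_unique F hP1 hP2)
  · rw [← heq] at h1'; omega
  · rw [← heq] at h0'; omega
  · exact hne (ppos_unique F hP1 hP2)

end Aux

lemma pi_ge (F : Finset (Multiset ℕ)) (n : ℕ) (hn : n > F.card) :
    ((n : ℝ) - F.card) ^ 2 / 24 ≤ (piNim F n : ℝ) := by
  classical
  set c := F.card with hc
  set m := (n + 1 - c) / 2 with hmdef
  choose xf hxle hxP using exists_ppos F
  set f : ℕ × ℕ → Multiset ℕ := fun p => xf p.1 p.2 ::ₘ p.1 ::ₘ {p.2} with hf
  set s := Finset.range m ×ˢ Finset.range m with hs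
  set img := s.image f with himg
  set targetSet : Set (Multiset ℕ) :=
    {t : Multiset ℕ | t.card = 3 ∧ (∀ a ∈ t, a < n) ∧ PPos F t} with htarget
  have hmem : ∀ p ∈ s, f p ∈ targetSet := by
    rintro ⟨y, z⟩ hp
    rw [hs, Finset.mem_product, Finset.mem_range, Finset.mem_range] at hp
    obtain ⟨hy, hz⟩ := hp
    have hxb := hxle y z
    refine ⟨by simp [hf], ?_, hxP y z⟩
    intro a ha
    rw [hf] at ha
    simp only [Multiset.mem_cons, Multiset.mem_singleton] at ha
    rcases ha with rfl | rfl | rfl <;> omega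
  have hsub : (↑img : Set (Multiset ℕ)) ⊆ targetSet := by
    intro t ht
    rw [himg, Finset.coe_image] at ht
    obtain ⟨p, hp, rfl⟩ := ht
    exact hmem p hp
  have hfin : targetSet.Finite := by
    apply Set.Finite.subset (Finset.finite_toSet
      ((Finset.range n ×ˢ Finset.range n ×ˢ Finset.range n).image
        (fun t : ℕ × ℕ × ℕ => (t.1 ::ₘ t.2.1 ::ₘ {t.2.2} : Multiset ℕ))))
    rintro t ⟨hcard, hlt, -⟩
    obtain ⟨a, b, d, rfl⟩ := Multiset.card_eq_three.mp hcard
    have ha : a < n := hlt a (by simp)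
    have hb : b < n := hlt b (by simp)
    have hd : d < n := hlt d (by simp)
    simp only [Finset.coe_image, Set.mem_image, Finset.mem_coe, Finset.mem_product,
      Finset.mem_range]
    exact ⟨(a, b, d), ⟨ha, hb, hd⟩, by simp [Multiset.insert_eq_cons]⟩
  have hpi_eq : piNim F n = targetSet.ncard := rfl
  have himg_le : img.card ≤ piNim F n := by
    rw [hpi_eq, ← Set.ncard_coe_finset img]
    exact Set.ncard_le_ncard hsub hfin
  have hfiber : ∀ t ∈ img, (s.filter (fun p => f p = t)).card ≤ 6 := by
    intro t ht
    set cand := t.toFinset.biUnion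
      (fun a => (t.erase a).toFinset.image (fun b => ((a, b) : ℕ × ℕ))) with hcand
    have hsubf : s.filter (fun p => f p = t) ⊆ cand := by
      intro p hp
      rw [Finset.mem_filter] at hp
      obtain ⟨-, hpt⟩ := hp
      have h1 : p.1 ∈ t := by rw [← hpt, hf]; simp
      have h2 : p.2 ∈ t.erase p.1 := by
        rw [← hpt]
        have : (f p).erase p.1 = xf p.1 p.2 ::ₘ {p.2} := by
          rw [hf]
          show (xf p.1 p.2 ::ₘ p.1 ::ₘ {p.2}).erase p.1 = _
          rw [Multiset.cons_swap, Multiset.erase_cons_head]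
        rw [this]
        simp
      rw [hcand, Finset.mem_biUnion]
      exact ⟨p.1, Multiset.mem_toFinset.2 h1,
        Finset.mem_image.2 ⟨p.2, Multiset.mem_toFinset.2 h2, rfl⟩⟩
    refine le_trans (Finset.card_le_card hsubf) ?_
    refine le_trans Finset.card_biUnion_le ?_
    have htc : (Multiset.card t) = 3 := (hsub ht).1
    have hstep : ∀ a ∈ t.toFinset,
        ((t.erase a).toFinset.image (fun b => ((a, b) : ℕ × ℕ))).card ≤ 2 := by
      intro a ha
      refine le_trans (Finset.card_image_le) ?_
      refine le_trans (Multiset.toFinset_card_le _) ?_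
      rw [Multiset.card_erase_of_mem (Multiset.mem_toFinset.1 ha), htc]
      decide
    refine le_trans (Finset.sum_le_sum hstep) ?_
    rw [Finset.sum_const, smul_eq_mul]
    have := Multiset.toFinset_card_le t
    omega
  have hcount : m * m ≤ 6 * piNim F n := by
    have h1 := Finset.card_le_mul_card_image s 6 hfiber
    rw [hs, Finset.card_product, Finset.card_range] at h1
    calc m * m ≤ 6 * img.card := h1
    _ ≤ 6 * piNim F n := by omega
  have hm2 : n - c ≤ 2 * m := by omega
  have hnc : ((n : ℝ) - c) ≤ 2 * m := by
    rw [show ((n:ℝ) - c) = ((n - c : ℕ) : ℝ) from by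
      rw [Nat.cast_sub (le_of_lt hn)]]
    exact_mod_cast hm2
  have h0 : (0:ℝ) ≤ (n:ℝ) - c := by
    have : (c : ℝ) ≤ n := by exact_mod_cast le_of_lt hn
    linarith
  have hpiR : (m : ℝ) * m ≤ 6 * piNim F n := by exact_mod_cast hcount
  nlinarith [mul_le_mul hnc hnc h0 (by positivity : (0:ℝ) ≤ 2 * (m:ℝ))]

/-- Lower bound π(n) ≥ (n − |F|)²/24 for n > |F|; hence any scaling limit is ≥ 1/24. -/
theorem pi_lower_bound (F : Finset (Multiset ℕ)) :
    (∀ n : ℕ, n > F.card → ((n : ℝ) - F.card) ^ 2 / 24 ≤ (piNim F n : ℝ)) ∧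
    ∀ n : ℕ, 0 < n → ∀ L : ℝ,
      Tendsto (fun k : ℕ => (piNim F (n * 2 ^ k) : ℝ) / ((n * 2 ^ k : ℕ) : ℝ) ^ 2)
        atTop (nhds L) →
      1 / 24 ≤ L := by
  refine ⟨fun n hn => pi_ge F n hn, ?_⟩
  intro n hn L hL
  have hNnat : Tendsto (fun k : ℕ => n * 2 ^ k) atTop atTop := by
    apply tendsto_atTop_mono (f := fun k : ℕ => (k : ℕ))
    · intro k
      calc k ≤ 2 ^ k := Nat.le_of_lt (Nat.lt_two_pow_self (n := k))
      _ ≤ n * 2 ^ k := Nat.le_mul_of_pos_left _ hn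
    · exact tendsto_id
  have hN : Tendsto (fun k : ℕ => ((n * 2 ^ k : ℕ) : ℝ)) atTop atTop :=
    tendsto_natCast_atTop_atTop.comp hNnat
  have h0 : Tendsto (fun k : ℕ => (F.card : ℝ) / ((n * 2 ^ k : ℕ) : ℝ)) atTop (nhds 0) :=
    Tendsto.div_atTop tendsto_const_nhds hN
  have hg : Tendsto
      (fun k : ℕ => (1 - (F.card : ℝ) / ((n * 2 ^ k : ℕ) : ℝ)) ^ 2 / 24)
      atTop (nhds (1 / 24)) := by
    have := ((tendsto_const_nhds (x := (1:ℝ)).sub h0).pow 2).div_const 24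
    norm_num at this
    convert this using 2
    norm_num
  refine le_of_tendsto_of_tendsto hg hL ?_
  have hev : ∀ᶠ k : ℕ in atTop, F.card < n * 2 ^ k := hNnat.eventually_gt_atTop F.card
  filter_upwards [hev] with k hk
  have hb := pi_ge F (n * 2 ^ k) hk
  have hNpos : (0 : ℝ) < ((n * 2 ^ k : ℕ) : ℝ) := by
    have : 0 < n * 2 ^ k := by positivity
    exact_mod_cast this
  have heq : (1 - (F.card : ℝ) / ((n * 2 ^ k : ℕ) : ℝ)) ^ 2 / 24
      = (((n * 2 ^ k : ℕ) : ℝ) - F.card) ^ 2 / 24 / ((n * 2 ^ k : ℕ) : ℝ) ^ 2 := by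
    have h1 : 1 - (F.card : ℝ) / ((n * 2 ^ k : ℕ) : ℝ)
        = (((n * 2 ^ k : ℕ) : ℝ) - F.card) / ((n * 2 ^ k : ℕ) : ℝ) := by
      field_simp
    rw [h1, div_pow]
    ring
  rw [heq]
  gcongr
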